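/- For all a, b ∈ ℝ² one has the lower bound |a/⟨a⟩ − b/⟨b⟩| ≳ |a − b| / (max(⟨a⟩, ⟨b⟩) min(⟨a⟩, ⟨b⟩)²), with an absolute implicit constant, where ⟨a⟩ = (1+|a|²)^{1/2}. -/

import Mathlib

open MeasureTheory

local notation "E2" => EuclideanSpace ℝ (Fin 2)

/-- Japanese bracket `⟨x⟩ = (1+|x|²)^{1/2}`. -/
noncomputable def jb (x : E2) : ℝ := Real.sqrt (1 + ‖x‖ ^ 2)

lemma jb_one_le (x : E2) : 1 ≤ jb x := by
  unfold jb
  have := Real.sq_sqrt (show (0:ℝ) ≤ 1 + ‖x‖^2 by positivity)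
  have h0 := Real.sqrt_nonneg (1 + ‖x‖^2)
  nlinarith [sq_nonneg ‖x‖]

lemma jb_sq (x : E2) : (jb x)^2 = 1 + ‖x‖^2 :=
  Real.sq_sqrt (by positivity)

lemma stmt19_aux1 (A B u v : ℝ) (hu : 0 ≤ u) (hv : 0 ≤ v)
    (hB2 : B^2 = 1 + v^2) (hA : 1 ≤ A) (hB : 1 ≤ B) (huA : u ≤ A) :
    B*u + A*v ≤ 2*A*(u+v) := by
  have h1 : B ≤ 1 + v := by nlinarith
  nlinarith

lemma stmt19_aux2 (A B u v : ℝ) (hu : 0 ≤ u) (hv : 0 ≤ v)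
    (hA2 : A^2 = 1 + u^2) (hB2 : B^2 = 1 + v^2) (hA : 1 ≤ A) (hB : 1 ≤ B) :
    (u - v)^2 ≤ 4 * (min A B)^2 * (B*u - A*v)^2 := by
  have huA : u ≤ A := by nlinarith
  have hvB : v ≤ B := by nlinarith
  have hkey : ∀ m : ℝ, 0 ≤ m → B*u + A*v ≤ 2*m*(u+v) →
      (u - v)^2 ≤ 4 * m^2 * (B*u - A*v)^2 := by
    intro m hm hs
    have hid : (B*u - A*v)*(B*u + A*v) = (u - v)*(u + v) := by
      linear_combination u^2 * hB2 - v^2 * hA2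
    rcases eq_or_lt_of_le (show (0:ℝ) ≤ B*u + A*v by positivity) with h0 | h0
    · have hu0 : u = 0 := by nlinarith
      have hv0 : v = 0 := by nlinarith
      simp [hu0, hv0]
    · have hsq : (B*u + A*v)^2 ≤ 4*m^2*(u+v)^2 := by nlinarith
      have h2 : (u-v)^2 * (B*u+A*v)^2 ≤ 4*m^2 * (B*u-A*v)^2 * (B*u+A*v)^2 := by
        have : (B*u-A*v)^2 * (B*u+A*v)^2 = (u-v)^2*(u+v)^2 := by
          nlinarith [hid]
        nlinarith [sq_nonneg (u-v), sq_nonneg (B*u+A*v)]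
      have hp : 0 < (B*u+A*v)^2 := by positivity
      exact le_of_mul_le_mul_right h2 hp
  rcases le_total A B with h | h
  · rw [min_eq_left h]
    exact hkey A (by linarith) (stmt19_aux1 A B u v hu hv hB2 hA hB huA)
  · rw [min_eq_right h]
    have := stmt19_aux1 B A v u hv hu hA2 hB hA hvB
    exact hkey B (by linarith) (by linarith)

lemma stmt19_aux3 (A B u v t : ℝ) (hu : 0 ≤ u) (hv : 0 ≤ v) (ht : t ≤ u*v)
    (hA2 : A^2 = 1 + u^2) (hB2 : B^2 = 1 + v^2) (hA : 1 ≤ A) (hB : 1 ≤ B) :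
    u^2 + v^2 - 2*t ≤ 4 * (min A B)^2 * (B^2*u^2 + A^2*v^2 - 2*(A*B)*t) := by
  have h1 := stmt19_aux2 A B u v hu hv hA2 hB2 hA hB
  have hm : 1 ≤ min A B := le_min hA hB
  have hAB : 1 ≤ A*B := by nlinarith
  have h3 : 0 ≤ u*v - t := by linarith
  have h4 : (0:ℝ) ≤ 8*(min A B)^2*(A*B) - 2 := by nlinarith
  nlinarith [mul_nonneg h4 h3]

/-- Nondegeneracy lower bound for the relativistic velocity map `a ↦ a/⟨a⟩`:
`|a/⟨a⟩ − b/⟨b⟩| ≳ |a − b| / (max(⟨a⟩,⟨b⟩) min(⟨a⟩,⟨b⟩)²)` with an absolute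
constant. -/
theorem stmt_19 :
    ∃ c > (0:ℝ), ∀ a b : E2,
      c * (‖a - b‖ / (max (jb a) (jb b) * min (jb a) (jb b) ^ 2)) ≤
        ‖(jb a)⁻¹ • a - (jb b)⁻¹ • b‖ := by
  refine ⟨1/2, by norm_num, fun a b => ?_⟩
  set A := jb a with hAdef
  set B := jb b with hBdef
  have hA : 1 ≤ A := jb_one_le a
  have hB : 1 ≤ B := jb_one_le b
  have hA0 : (0:ℝ) < A := by linarith
  have hB0 : (0:ℝ) < B := by linarith
  have hA2 : A^2 = 1 + ‖a‖^2 := jb_sq a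
  have hB2 : B^2 = 1 + ‖b‖^2 := jb_sq b
  set t : ℝ := inner ℝ a b with htdef
  set X : ℝ := ‖(A)⁻¹ • a - (B)⁻¹ • b‖ with hXdef
  have hX0 : 0 ≤ X := norm_nonneg _
  -- squared norm of the difference of velocities
  have hx2 : X^2 = A⁻¹^2*‖a‖^2 - 2*(A⁻¹*B⁻¹)*t + B⁻¹^2*‖b‖^2 := by
    rw [hXdef, norm_sub_sq_real, norm_smul, norm_smul, real_inner_smul_left,
      real_inner_smul_right, Real.norm_eq_abs, Real.norm_eq_abs,
      abs_of_pos (by positivity), abs_of_pos (by positivity)]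
    ring
  have hX2 : (A*B)^2 * X^2 = B^2*‖a‖^2 + A^2*‖b‖^2 - 2*(A*B)*t := by
    rw [hx2]
    field_simp
    ring
  have hd2 : ‖a - b‖^2 = ‖a‖^2 + ‖b‖^2 - 2*t := by
    rw [norm_sub_sq_real]; ring
  have ht : t ≤ ‖a‖ * ‖b‖ := real_inner_le_norm a b
  have hkey := stmt19_aux3 A B ‖a‖ ‖b‖ t (norm_nonneg a) (norm_nonneg b) ht hA2 hB2 hA hB
  set m := min A B with hmdef
  set M := max A B with hMdef
  have hm1 : 1 ≤ m := le_min hA hB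
  have hM1 : 1 ≤ M := le_trans hA (le_max_left _ _)
  have hMm : M * m = A * B := max_mul_min A B
  -- squared inequality : ‖a-b‖^2 ≤ (2 * (M*m^2) * X)^2
  have hsq : ‖a - b‖^2 ≤ (2 * (M*m^2) * X)^2 := by
    have : (2 * (M*m^2) * X)^2 = 4 * m^2 * ((M*m)^2 * X^2) := by ring
    rw [this, hMm, hX2, hd2]
    linarith [hkey]
  have hfin : ‖a - b‖ ≤ 2 * (M*m^2) * X := by
    have h := Real.sqrt_le_sqrt hsq
    rwa [Real.sqrt_sq (norm_nonneg _), Real.sqrt_sq (by positivity)] at h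
  have hP : (0:ℝ) < M * m^2 := by positivity
  rw [show (1:ℝ)/2 * (‖a - b‖ / (M * m^2)) = ‖a - b‖ / (2*(M*m^2)) by ring,
    div_le_iff₀ (by positivity)]
  linarith [hfin]
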